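/- arXiv:1704.03748 — 2 statements merged into one kernel-verified Lean document; each statement's English description precedes it below -/
import Mathlib

section
/- Let (Ω, μ) be a finite measure space, p ∈ (1, ∞), and let f : ℝ → ℝ be continuous with f(s) → 0 as s → 0 and |f(s)| ≤ c₁ + c₂|s|^{p−1} for all s, and let F(t) = ∫₀ᵗ f(s) ds satisfy F(t)/t → +∞ as t → +∞ and F(t)/t → −∞ as t → −∞. Let (v_n) ⊂ L^p(μ) and v ∈ L^p(μ) with v_n → v in L^p(μ) and v ≠ 0 (i.e. μ({x : v(x) ≠ 0}) > 0). Then ∫_Ω F(t v_n) dμ / t → +∞ as t → ∞ uniformly in n: for every M > 0 there exist t₀ > 0 and n₀ ∈ ℕ such that ∫_Ω F(t v_n) dμ ≥ M t for every t > t₀ and every n ≥ n₀. -/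
open Filter Topology MeasureTheory
open scoped ENNReal NNReal

theorem stmt_9_superlinear (F : ℝ → ℝ) (hFc : Continuous F)
    (hFtop : Tendsto (fun t : ℝ => F t / t) atTop atTop)
    (hFbot : Tendsto (fun t : ℝ => F t / t) atBot atBot)
    (K : ℝ) (hK : 0 < K) : ∃ C : ℝ, 0 ≤ C ∧ ∀ s : ℝ, K * |s| - C ≤ F s := by
  obtain ⟨T₁, hT₁⟩ := (hFtop.eventually_ge_atTop K).exists_forall_of_atTop
  obtain ⟨T₂, hT₂⟩ := (hFbot.eventually_le_atBot (-K)).exists_forall_of_atBot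
  set a : ℝ := min T₂ (-1)
  set b : ℝ := max T₁ 1
  have hab : a ≤ b := le_trans (min_le_right _ _) (by norm_num : (-1:ℝ) ≤ max T₁ 1)
  obtain ⟨x₀, _, hx₀⟩ := isCompact_Icc.exists_isMinOn (Set.nonempty_Icc.2 hab)
    (hFc.continuousOn (s := Set.Icc a b))
  set B : ℝ := F x₀
  set D : ℝ := K * max |a| |b|
  refine ⟨max 0 (D - B), le_max_left _ _, fun s => ?_⟩
  rcases le_or_gt s a with hs | hs
  · have hsneg : s < 0 := lt_of_le_of_lt hs (lt_of_le_of_lt (min_le_right _ _) (by norm_num))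
    have h1 : F s / s ≤ -K := hT₂ s (le_trans hs (min_le_left _ _))
    have h2 : -K * s ≤ F s := by
      have := (div_le_iff_of_neg hsneg).mp h1
      linarith
    have h3 : K * |s| ≤ F s := by rw [abs_of_neg hsneg]; nlinarith
    have h0 : (0:ℝ) ≤ max 0 (D - B) := le_max_left _ _
    linarith
  rcases le_or_gt b s with hs' | hs'
  · have hspos : 0 < s := lt_of_lt_of_le (lt_of_lt_of_le (by norm_num) (le_max_right T₁ 1)) hs'
    have h1 : K ≤ F s / s := hT₁ s (le_trans (le_max_left _ _) hs')
    have h2 : K * s ≤ F s := (le_div_iff₀ hspos).mp h1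
    have h0 : (0:ℝ) ≤ max 0 (D - B) := le_max_left _ _
    rw [abs_of_pos hspos]; linarith
  · have hmem : s ∈ Set.Icc a b := ⟨hs.le, hs'.le⟩
    have h1 : B ≤ F s := hx₀ hmem
    have h2 : K * |s| ≤ D := by
      have : |s| ≤ max |a| |b| := abs_le_max_abs_abs hs.le hs'.le
      exact mul_le_mul_of_nonneg_left this hK.le
    have h3 : D - B ≤ max 0 (D - B) := le_max_right _ _
    linarith

theorem stmt_9_bound (p : ℝ) (hp : 1 < p) (f : ℝ → ℝ) (hf : Continuous f)
    (c₁ c₂ : ℝ) (hc₂ : 0 < c₂)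
    (hgrowth : ∀ s : ℝ, |f s| ≤ c₁ + c₂ * |s| ^ (p - 1))
    (F : ℝ → ℝ) (hF : ∀ t : ℝ, F t = ∫ s in (0 : ℝ)..t, f s) :
    (Continuous F) ∧ ∀ s : ℝ, |F s| ≤ c₁ * |s| + c₂ * |s| ^ p := by
  constructor
  · have : F = fun t => ∫ s in (0:ℝ)..t, f s := funext hF
    rw [this]
    exact intervalIntegral.continuous_primitive (fun a b => hf.intervalIntegrable a b) 0
  · intro s
    have key : ‖∫ x in (0:ℝ)..s, f x‖ ≤ (c₁ + c₂ * |s| ^ (p - 1)) * |s - 0| := by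
      apply intervalIntegral.norm_integral_le_of_norm_le_const
      intro x hx
      have hxs : |x| ≤ |s| := by
        rcases Set.mem_uIoc.mp hx with h | h
        · rw [abs_of_pos h.1, abs_of_nonneg (le_trans h.1.le h.2)]; exact h.2
        · rw [abs_of_nonpos h.2, abs_of_neg (lt_of_lt_of_le h.1 h.2)]; linarith [h.1]
      calc ‖f x‖ = |f x| := rfl
        _ ≤ c₁ + c₂ * |x| ^ (p - 1) := hgrowth x
        _ ≤ c₁ + c₂ * |s| ^ (p - 1) := by
            have := Real.rpow_le_rpow (abs_nonneg x) hxs (by linarith : (0:ℝ) ≤ p - 1)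
            nlinarith
    rw [hF s]
    rw [Real.norm_eq_abs, sub_zero] at key
    have hrw : |s| ^ (p - 1) * |s| = |s| ^ p := by
      rcases eq_or_ne s 0 with rfl | hs
      · simp [Real.zero_rpow (by linarith : p - 1 ≠ 0), Real.zero_rpow (by linarith : p ≠ 0)]
      · have habs : (0:ℝ) < |s| := abs_pos.mpr hs
        have h2 : |s| ^ (p-1) * |s| ^ (1:ℝ) = |s| ^ p := by
          rw [← Real.rpow_add habs]; norm_num
        simpa using h2
    nlinarith [key, abs_nonneg s, Real.rpow_nonneg (abs_nonneg s) (p-1)]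

theorem stmt_9
    {Ω : Type*} [MeasurableSpace Ω] (μ : Measure Ω) [IsFiniteMeasure μ]
    (p : ℝ) (hp : 1 < p)
    (f : ℝ → ℝ) (hf : Continuous f)
    (hf0 : Tendsto f (𝓝 0) (𝓝 0))
    (c₁ c₂ : ℝ) (hc₁ : 0 < c₁) (hc₂ : 0 < c₂)
    (hgrowth : ∀ s : ℝ, |f s| ≤ c₁ + c₂ * |s| ^ (p - 1))
    (F : ℝ → ℝ) (hF : ∀ t : ℝ, F t = ∫ s in (0 : ℝ)..t, f s)
    (hFtop : Tendsto (fun t : ℝ => F t / t) atTop atTop)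
    (hFbot : Tendsto (fun t : ℝ => F t / t) atBot atBot)
    (v : Ω → ℝ) (hv : MemLp v (ENNReal.ofReal p) μ)
    (vn : ℕ → Ω → ℝ) (hvn : ∀ n, MemLp (vn n) (ENNReal.ofReal p) μ)
    (hconv : Tendsto (fun n => eLpNorm (vn n - v) (ENNReal.ofReal p) μ) atTop (𝓝 0))
    (hvne : 0 < μ {x | v x ≠ 0}) :
    ∀ M > 0, ∃ t₀ > 0, ∃ n₀ : ℕ, ∀ t > t₀, ∀ n ≥ n₀,
      M * t ≤ ∫ x, F (t * vn n x) ∂μ := by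
  obtain ⟨hFc, hFb⟩ := stmt_9_bound p hp f hf c₁ c₂ hc₂ hgrowth F hF
  have hp1 : (1 : ℝ≥0∞) ≤ ENNReal.ofReal p := ENNReal.one_le_ofReal.mpr hp.le
  have hvint : Integrable v μ := hv.integrable hp1
  have hvnint : ∀ n, Integrable (vn n) μ := fun n => (hvn n).integrable hp1
  -- A = ∫ |v| > 0
  set A : ℝ := ∫ x, |v x| ∂μ with hA_def
  have hA : 0 < A := by
    rcases lt_or_ge 0 A with h | h
    · exact h
    · exfalso
      have hA0 : A = 0 := le_antisymm h (integral_nonneg fun x => abs_nonneg _)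
      have := (integral_eq_zero_iff_of_nonneg (fun x => abs_nonneg (v x)) hvint.abs).mp hA0
      have hv0 : v =ᵐ[μ] 0 := by
        filter_upwards [this] with x hx
        simpa using hx
      have : μ {x | v x ≠ 0} = 0 := by
        have := hv0
        rw [Filter.EventuallyEq, ae_iff] at this
        simpa using this
      exact absurd this hvne.ne'
  -- n₀ such that ∫|vn n| ≥ A/2
  have hL1conv : Tendsto (fun n => eLpNorm (vn n - v) 1 μ) atTop (𝓝 0) := by
    set c : ℝ≥0∞ := (μ Set.univ) ^ ((1:ℝ)/(1:ℝ≥0∞).toReal - 1/(ENNReal.ofReal p).toReal)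
    have hc_ne : c ≠ ⊤ := by
      apply ENNReal.rpow_ne_top_of_nonneg _ (measure_ne_top μ _)
      have hpt : (ENNReal.ofReal p).toReal = p := ENNReal.toReal_ofReal (by linarith)
      rw [hpt]
      simp only [ENNReal.toReal_one]
      have : 1/p ≤ 1 := by
        rw [div_le_one (by linarith)]; linarith
      linarith
    have hle : ∀ n, eLpNorm (vn n - v) 1 μ ≤ eLpNorm (vn n - v) (ENNReal.ofReal p) μ * c :=
      fun n => eLpNorm_le_eLpNorm_mul_rpow_measure_univ hp1
        ((hvn n).sub hv).aestronglyMeasurable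
    have hmul : Tendsto (fun n => eLpNorm (vn n - v) (ENNReal.ofReal p) μ * c) atTop (𝓝 0) := by
      have := ENNReal.Tendsto.mul_const hconv (Or.inr hc_ne)
      simpa using this
    exact tendsto_of_tendsto_of_tendsto_of_le_of_le tendsto_const_nhds hmul
      (fun n => zero_le) hle
  have hev : ∀ᶠ n in atTop, eLpNorm (vn n - v) 1 μ < ENNReal.ofReal (A/2) :=
    hL1conv.eventually_lt_const (ENNReal.ofReal_pos.mpr (by linarith))
  obtain ⟨n₀, hn₀⟩ := hev.exists_forall_of_atTop
  have hvn_lb : ∀ n ≥ n₀, A/2 ≤ ∫ x, |vn n x| ∂μ := by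
    intro n hn
    have hsubint : Integrable (fun x => vn n x - v x) μ := (hvnint n).sub hvint
    have hint_sub : ∫ x, |vn n x - v x| ∂μ ≤ A/2 := by
      have h1 : ∫ x, |vn n x - v x| ∂μ = (eLpNorm (vn n - v) 1 μ).toReal := by
        rw [eLpNorm_one_eq_lintegral_enorm]
        have := integral_norm_eq_lintegral_enorm
          (f := fun x => vn n x - v x) (μ := μ) hsubint.aestronglyMeasurable
        simpa [Real.norm_eq_abs] using this
      rw [h1]
      exact ENNReal.toReal_le_of_le_ofReal (by linarith) (hn₀ n hn).le
    have hmono : A ≤ ∫ x, (|vn n x| + |vn n x - v x|) ∂μ := by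
      apply integral_mono hvint.abs ((hvnint n).abs.add hsubint.abs)
      intro x
      have h1 := abs_sub_abs_le_abs_sub (v x) (vn n x)
      have h2 : |v x - vn n x| = |vn n x - v x| := abs_sub_comm _ _
      simp only [Pi.add_apply]
      linarith
    rw [integral_add (hvnint n).abs hsubint.abs] at hmono
    linarith
  -- main argument
  intro M hM
  set K : ℝ := 4 * M / A with hK_def
  have hKpos : 0 < K := by positivity
  obtain ⟨C, hC0, hCsl⟩ := stmt_9_superlinear F hFc hFtop hFbot K hKpos
  set mΩ : ℝ := (μ Set.univ).toReal with hmΩ_def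
  have hmΩ0 : 0 ≤ mΩ := ENNReal.toReal_nonneg
  refine ⟨max 1 (C * mΩ / M), lt_max_of_lt_left one_pos, n₀, fun t ht n hn => ?_⟩
  have ht1 : 1 < t := lt_of_le_of_lt (le_max_left _ _) ht
  have htpos : 0 < t := by linarith
  have htC : C * mΩ ≤ M * t := by
    have : C * mΩ / M < t := lt_of_le_of_lt (le_max_right _ _) ht
    rw [div_lt_iff₀ hM] at this
    linarith
  -- integrability of F ∘ (t • vn n)
  have haesm : AEStronglyMeasurable (fun x => F (t * vn n x)) μ :=
    hFc.comp_aestronglyMeasurable ((hvn n).aestronglyMeasurable.const_mul t)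
  have hppos : 0 < p := by linarith
  have hvnp : Integrable (fun x => |vn n x| ^ p) μ := by
    have := (hvn n).integrable_norm_rpow (by simpa [ENNReal.ofReal_eq_zero] using hppos)
      ENNReal.ofReal_ne_top
    simpa [Real.norm_eq_abs, ENNReal.toReal_ofReal hppos.le] using this
  have hdom : Integrable (fun x => c₁ * |t| * |vn n x| + c₂ * |t| ^ p * |vn n x| ^ p) μ :=
    (((hvnint n).abs).const_mul _).add (hvnp.const_mul _)
  have hFint : Integrable (fun x => F (t * vn n x)) μ := by
    apply Integrable.mono' hdom haesm
    filter_upwards with x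
    have hb := hFb (t * vn n x)
    have habs : |t * vn n x| = |t| * |vn n x| := abs_mul _ _
    have hrp : |t * vn n x| ^ p = |t| ^ p * |vn n x| ^ p := by
      rw [habs, Real.mul_rpow (abs_nonneg _) (abs_nonneg _)]
    rw [Real.norm_eq_abs]
    calc |F (t * vn n x)| ≤ c₁ * |t * vn n x| + c₂ * |t * vn n x| ^ p := hb
      _ = c₁ * |t| * |vn n x| + c₂ * |t| ^ p * |vn n x| ^ p := by rw [hrp, habs]; ring
  -- lower bound
  have hlow : Integrable (fun x => K * (t * |vn n x|) - C) μ :=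
    (((hvnint n).abs.const_mul t).const_mul K).sub (integrable_const C)
  have hmono : ∫ x, (K * (t * |vn n x|) - C) ∂μ ≤ ∫ x, F (t * vn n x) ∂μ := by
    apply integral_mono hlow hFint
    intro x
    have := hCsl (t * vn n x)
    have habs : |t * vn n x| = t * |vn n x| := by
      rw [abs_mul, abs_of_pos htpos]
    simp only []
    rw [← habs]
    linarith
  have hcalc : ∫ x, (K * (t * |vn n x|) - C) ∂μ
      = K * t * (∫ x, |vn n x| ∂μ) - C * mΩ := by
    rw [integral_sub (((hvnint n).abs.const_mul t).const_mul K) (integrable_const C),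
      integral_const, smul_eq_mul]
    have : ∫ x, K * (t * |vn n x|) ∂μ = K * t * ∫ x, |vn n x| ∂μ := by
      rw [← integral_const_mul]
      congr 1; funext x; ring
    rw [this, hmΩ_def, Measure.real]; ring
  have hKA : K * t * (A/2) = 2 * M * t := by
    field_simp [hK_def]
    rw [hK_def, div_mul_cancel₀ _ hA.ne']; ring
  have hfin : K * t * (A/2) ≤ K * t * ∫ x, |vn n x| ∂μ := by
    apply mul_le_mul_of_nonneg_left (hvn_lb n hn)
    positivity
  have := hmono
  rw [hcalc] at this
  nlinarith [hfin, hKA]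
end

section
/- Let (Ω, μ) be a finite measure space, p ∈ (1, ∞), and let f : ℝ → ℝ be a continuous, strictly increasing function with |f(s)| ≤ c₁ + c₂|s|^{p−1} for all s ∈ ℝ. Let u ∈ L^p(μ) with μ({x : u(x) ≠ 0}) > 0. Then the map t ↦ ∫_Ω f(t u(x)) u(x) dμ(x) is strictly increasing on (0, ∞): for all 0 < s < t, ∫_Ω f(s u) u dμ < ∫_Ω f(t u) u dμ. -/
open MeasureTheory

theorem stmt_10
    {Ω : Type*} [MeasurableSpace Ω] (μ : Measure Ω) [IsFiniteMeasure μ]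
    (p : ℝ) (hp : 1 < p)
    (f : ℝ → ℝ) (hf : Continuous f) (hfmono : StrictMono f)
    (c₁ c₂ : ℝ) (hc₁ : 0 < c₁) (hc₂ : 0 < c₂)
    (hgrowth : ∀ s : ℝ, |f s| ≤ c₁ + c₂ * |s| ^ (p - 1))
    (u : Ω → ℝ) (hu : MemLp u (ENNReal.ofReal p) μ)
    (hune : 0 < μ {x | u x ≠ 0}) :
    ∀ s t : ℝ, 0 < s → s < t →
      (∫ x, f (s * u x) * u x ∂μ) < ∫ x, f (t * u x) * u x ∂μ := by
  intro s t hs hst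
  have hp0 : (0:ℝ) < p := by linarith
  have hu1 : Integrable u μ := by
    apply hu.integrable
    simpa using ENNReal.one_le_ofReal.mpr hp.le
  have hup : Integrable (fun x => |u x| ^ p) μ := by
    have h := hu.integrable_norm_rpow (by simp [hp0]) (by simp)
    simpa [ENNReal.toReal_ofReal hp0.le] using h
  have key : ∀ r : ℝ, Integrable (fun x => f (r * u x) * u x) μ := by
    intro r
    have hu' := hu.aestronglyMeasurable
    have hmeas : AEStronglyMeasurable (fun x => f (r * u x) * u x) μ :=
      (hf.comp_aestronglyMeasurable (aestronglyMeasurable_const.mul hu')).mul hu'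
    refine Integrable.mono' ((hu1.abs.const_mul c₁).add
      (hup.const_mul (c₂ * |r| ^ (p-1)))) hmeas ?_
    filter_upwards with x
    have habs : |u x| ^ (p-1) * |u x| = |u x| ^ p := by
      nth_rewrite 2 [← Real.rpow_one (|u x|)]
      rw [← Real.rpow_add_of_nonneg (abs_nonneg _) (by linarith) zero_le_one]
      norm_num
    calc ‖f (r * u x) * u x‖ = |f (r * u x)| * |u x| := abs_mul _ _
      _ ≤ (c₁ + c₂ * |r * u x| ^ (p-1)) * |u x| :=
          mul_le_mul_of_nonneg_right (hgrowth _) (abs_nonneg _)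
      _ = c₁ * |u x| + c₂ * |r| ^ (p-1) * (|u x| ^ (p-1) * |u x|) := by
          rw [abs_mul, Real.mul_rpow (abs_nonneg _) (abs_nonneg _)]; ring
      _ = c₁ * |u x| + c₂ * |r| ^ (p-1) * |u x| ^ p := by rw [habs]
  set g : Ω → ℝ := fun x => f (t * u x) * u x - f (s * u x) * u x with hg
  have hgpos : ∀ x, u x ≠ 0 → 0 < g x := by
    intro x hx
    rcases hx.lt_or_gt with h | h
    · have h1 : t * u x < s * u x := by nlinarith
      have := hfmono h1
      simp only [hg, sub_pos]
      nlinarith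
    · have h1 : s * u x < t * u x := by nlinarith
      have := hfmono h1
      simp only [hg, sub_pos]
      nlinarith
  have hgnn : ∀ x, 0 ≤ g x := by
    intro x
    by_cases hx : u x = 0
    · simp [hg, hx]
    · exact (hgpos x hx).le
  have hgint : Integrable g μ := (key t).sub (key s)
  have hpos : 0 < ∫ x, g x ∂μ := by
    rcases (integral_nonneg (f := g) hgnn).lt_or_eq with h | h
    · exact h
    · exfalso
      have hae : g =ᵐ[μ] 0 :=
        (integral_eq_zero_iff_of_nonneg hgnn hgint).mp h.symm
      have h0 : μ {x | g x ≠ 0} = 0 := by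
        simpa [Filter.EventuallyEq, ae_iff] using hae
      have hsub : {x | u x ≠ 0} ⊆ {x | g x ≠ 0} := fun x hx => (hgpos x hx).ne'
      exact absurd (le_antisymm (le_trans (measure_mono hsub) h0.le) zero_le)
        hune.ne'
  have := integral_sub (key t) (key s)
  simp only [hg] at hpos
  rw [this] at hpos
  linarith
end
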